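/- Define h_q(x) = T_q(qx) · ∏_{j=1}^q (1 - jx), where T_q is the Chebyshev polynomial of the first kind of degree q. Then h_q has degree at most 2q, |h_q(1/N)| ≤ 1 for all positive integers N, and there exists a universal constant c > 0 such that the supremum of |h_q| on [0, c/q] is at least 2^q for all q. -/

import Mathlib

open Polynomial

/-! ### Auxiliary lemmas -/

private lemma natDegree_T_le_aux : ∀ n : ℕ, (Chebyshev.T ℝ (n:ℤ)).natDegree ≤ n ∧
    (Chebyshev.T ℝ ((n:ℤ)+1)).natDegree ≤ n + 1 := by
  intro n
  induction n with
  | zero => simp [Chebyshev.T_zero, Chebyshev.T_one]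
  | succ n ih =>
    obtain ⟨h1, h2⟩ := ih
    refine ⟨by push_cast; exact h2, ?_⟩
    have key : ((n:ℤ)+1)+1 = (n:ℤ)+2 := by ring
    push_cast
    rw [key, Chebyshev.T_add_two]
    refine (natDegree_sub_le _ _).trans (max_le ?_ (h1.trans (by omega)))
    refine (natDegree_mul_le).trans ?_
    have : (2 * X : ℝ[X]).natDegree ≤ 1 := by
      simpa using natDegree_C_mul_le (2:ℝ) (X : ℝ[X])
    omega

private lemma natDegree_T_le (n : ℕ) : (Chebyshev.T ℝ (n:ℤ)).natDegree ≤ n :=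
  (natDegree_T_le_aux n).1

private lemma one_le_T_eval : ∀ n : ℕ, ∀ y : ℝ, 1 ≤ y →
    1 ≤ (Chebyshev.T ℝ (n:ℤ)).eval y ∧
    (Chebyshev.T ℝ (n:ℤ)).eval y ≤ (Chebyshev.T ℝ ((n:ℤ)+1)).eval y := by
  intro n
  induction n with
  | zero => intro y hy; simp [Chebyshev.T_zero, Chebyshev.T_one, hy]
  | succ n ih =>
    intro y hy
    obtain ⟨h1, h2⟩ := ih y hy
    have key : ((n:ℤ)+1)+1 = (n:ℤ)+2 := by ring
    constructor
    · push_cast; linarith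
    · push_cast
      rw [key, Chebyshev.T_add_two]
      simp only [eval_sub, eval_mul, eval_ofNat, eval_X]
      nlinarith

private lemma abs_T_le_one (n : ℤ) (y : ℝ) (hy : y ∈ Set.Icc (-1:ℝ) 1) :
    |(Chebyshev.T ℝ n).eval y| ≤ 1 := by
  have := Real.cos_arccos hy.1 hy.2
  rw [← this, Chebyshev.T_real_cos]
  exact Real.abs_cos_le_one _

private lemma pow_le_three_pow_mul_factorial :
    ∀ q : ℕ, (q:ℝ)^q ≤ 3^q * (q.factorial : ℝ) := by
  intro q
  induction q with
  | zero => simp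
  | succ q ih =>
    rcases Nat.eq_zero_or_pos q with h | hq
    · subst h; norm_num
    have hq0 : (0:ℝ) < q := by exact_mod_cast hq
    have e1 : ((q:ℝ)+1)^q ≤ 3 * (q:ℝ)^q := by
      have h1 : ((q:ℝ)+1) = (q:ℝ) * (1 + 1/q) := by field_simp
      have h2 : (1 + 1/(q:ℝ))^q ≤ Real.exp (1/q) ^ q := by
        apply pow_le_pow_left₀ (by positivity)
        linarith [Real.add_one_le_exp (1/(q:ℝ))]
      have h3 : Real.exp (1/(q:ℝ)) ^ q = Real.exp 1 := by
        rw [← Real.exp_nat_mul]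
        rw [mul_one_div, div_self (ne_of_gt hq0)]
      have h4 : Real.exp 1 ≤ 3 := by
        linarith [Real.exp_one_lt_d9.le]
      calc ((q:ℝ)+1)^q = (q:ℝ)^q * (1+1/q)^q := by rw [h1, mul_pow]
        _ ≤ (q:ℝ)^q * 3 := by
            have h5 : (1 + 1/(q:ℝ))^q ≤ 3 := by rw [h3] at h2; linarith
            exact mul_le_mul_of_nonneg_left h5 (by positivity)
        _ = 3 * (q:ℝ)^q := by ring
    have e2 : ((q:ℝ)+1)^(q+1) = ((q:ℝ)+1) * ((q:ℝ)+1)^q := by ring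
    push_cast
    rw [e2]
    calc ((q:ℝ)+1) * ((q:ℝ)+1)^q ≤ ((q:ℝ)+1) * (3 * (q:ℝ)^q) := by
          exact mul_le_mul_of_nonneg_left e1 (by positivity)
      _ ≤ ((q:ℝ)+1) * (3 * (3^q * q.factorial)) := by
          have := mul_le_mul_of_nonneg_left ih (by positivity : (0:ℝ) ≤ 3)
          exact mul_le_mul_of_nonneg_left (by linarith) (by positivity)
      _ = 3^(q+1) * ((q+1) * q.factorial) := by ring
      _ = 3^(q+1) * ((q+1).factorial : ℝ) := by rw [Nat.factorial_succ]; push_cast; ring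

private lemma prod_Ioc_sub (k q : ℕ) (h : k ≤ q) :
    (∏ j ∈ Finset.Ioc k q, (j - k)) = (q - k).factorial := by
  induction q with
  | zero => interval_cases k <;> simp
  | succ q ih =>
    rcases Nat.lt_or_ge q k with h2 | h2
    · have : k = q + 1 := by omega
      subst this; simp
    · rw [Finset.prod_Ioc_succ_top (by omega), ih h2]
      have : q + 1 - k = (q - k) + 1 := by omega
      rw [this, Nat.factorial_succ]
      ring_nf

private lemma prod_Ioc_rev (k : ℕ) :
    (∏ j ∈ Finset.Ioc 0 k, (k + 1 - j)) = k.factorial := by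
  have h1 : (∏ j ∈ Finset.Ioc 0 k, (k + 1 - j)) = ∏ j ∈ Finset.Ioc 0 k, j := by
    refine Finset.prod_nbij' (fun j => k + 1 - j) (fun j => k + 1 - j) ?_ ?_ ?_ ?_ ?_ <;>
      intros <;> simp_all <;> omega
  rw [h1, ← Finset.prod_Ico_id_eq_factorial k, ← Finset.Icc_add_one_left_eq_Ioc, ← Finset.Ico_add_one_right_eq_Icc, zero_add]

private lemma prod_m (q k : ℕ) (hkq : k ≤ q) :
    (∏ j ∈ Finset.Icc 1 q, (if j ≤ k then k+1-j else j-k)) =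
      k.factorial * (q-k).factorial := by
  rw [show Finset.Icc 1 q = Finset.Ioc 0 q from Finset.Icc_add_one_left_eq_Ioc 0 q, ← Finset.prod_Ioc_consecutive _ (Nat.zero_le k) hkq]
  congr 1
  · rw [← prod_Ioc_rev k]
    apply Finset.prod_congr rfl
    intro j hj
    simp only [Finset.mem_Ioc] at hj
    rw [if_pos hj.2]
  · rw [← prod_Ioc_sub k q hkq]
    apply Finset.prod_congr rfl
    intro j hj
    simp only [Finset.mem_Ioc] at hj
    rw [if_neg (by omega)]

private lemma prod_lower (q k : ℕ) (hk1 : 1 ≤ k) (hkq : k ≤ q) :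
    (2/(2*(k:ℝ)+1))^q * (1/2)^q * ((k.factorial * (q-k).factorial : ℕ) : ℝ)
      ≤ ∏ j ∈ Finset.Icc 1 q, |1 - (j:ℝ) * (2/(2*(k:ℝ)+1))| := by
  set x : ℝ := 2/(2*(k:ℝ)+1) with hx
  have hden : (0:ℝ) < 2*(k:ℝ)+1 := by positivity
  have hxpos : 0 < x := by positivity
  have key : ∀ j ∈ Finset.Icc 1 q,
      x * (1/2) * ((if j ≤ k then k+1-j else j-k : ℕ) : ℝ) ≤ |1 - (j:ℝ) * x| := by
    intro j hj
    have h1 : 1 - (j:ℝ) * x = (2*(k:ℝ)+1 - 2*j) / (2*(k:ℝ)+1) := by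
      rw [hx]; field_simp
    have h2 : ((if j ≤ k then k+1-j else j-k : ℕ) : ℝ) ≤ |2*(k:ℝ)+1 - 2*(j:ℝ)| := by
      rcases le_or_gt j k with h | h
      · have hjk : (j:ℝ) ≤ k := by exact_mod_cast h
        rw [if_pos h, abs_of_nonneg (by linarith)]
        push_cast [Nat.cast_sub (by omega : j ≤ k + 1)]
        linarith
      · have hkj : (k:ℝ) + 1 ≤ j := by exact_mod_cast h
        rw [if_neg (by omega), abs_of_nonpos (by linarith)]
        push_cast [Nat.cast_sub (by omega : k ≤ j)]
        linarith
    have h3 : x * (1/2) * ((if j ≤ k then k+1-j else j-k : ℕ) : ℝ)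
        = ((if j ≤ k then k+1-j else j-k : ℕ) : ℝ) / (2*(k:ℝ)+1) := by
      rw [hx]; field_simp
    rw [h1, abs_div, abs_of_pos hden, h3]
    exact div_le_div_of_nonneg_right h2 hden.le
  calc x^q * (1/2)^q * ((k.factorial * (q-k).factorial : ℕ) : ℝ)
      = ∏ j ∈ Finset.Icc 1 q, (x * (1/2) * ((if j ≤ k then k+1-j else j-k : ℕ) : ℝ)) := by
        rw [Finset.prod_mul_distrib, Finset.prod_mul_distrib, Finset.prod_const,
          Finset.prod_const, Nat.card_Icc, Nat.add_sub_cancel, ← Nat.cast_prod,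
          prod_m q k hkq]
    _ ≤ _ := Finset.prod_le_prod (fun i _ => by positivity) key

private lemma choose_bound (q k : ℕ) (hkq : k ≤ q) :
    (q.factorial : ℝ) ≤ 2^q * ((k.factorial * (q-k).factorial : ℕ) : ℝ) := by
  have h1 : q.choose k ≤ 2^q := by
    calc q.choose k ≤ ∑ i ∈ Finset.range (q+1), q.choose i :=
        Finset.single_le_sum (fun i _ => Nat.zero_le _) (Finset.mem_range.2 (by omega))
      _ = 2^q := Nat.sum_range_choose q
  have h2 : q.factorial = q.choose k * (k.factorial * (q-k).factorial) := by
    rw [← Nat.choose_mul_factorial_mul_factorial hkq]; ring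
  have h3 : q.factorial ≤ 2^q * (k.factorial * (q-k).factorial) := by
    rw [h2]; exact Nat.mul_le_mul_right _ h1
  exact_mod_cast h3

/-- The polynomial `h_q(x) = T_q(qx) ∏_{j=1}^q (1 - jx)`, where `T_q` is the Chebyshev
polynomial of the first kind of degree `q`. -/
noncomputable def hPoly (q : ℕ) : Polynomial ℝ :=
  ((Polynomial.Chebyshev.T ℝ (q : ℤ)).comp (Polynomial.C (q : ℝ) * Polynomial.X)) *
    ∏ j ∈ Finset.Icc 1 q, (1 - Polynomial.C (j : ℝ) * Polynomial.X)

private lemma hPoly_eval (q : ℕ) (x : ℝ) :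
    (hPoly q).eval x = (Chebyshev.T ℝ (q:ℤ)).eval ((q:ℝ) * x) *
      ∏ j ∈ Finset.Icc 1 q, (1 - (j:ℝ) * x) := by
  simp [hPoly, eval_prod]

private lemma part1 (q : ℕ) : (hPoly q).natDegree ≤ 2 * q := by
  refine (natDegree_mul_le).trans ?_
  have h1 : ((Chebyshev.T ℝ (q : ℤ)).comp (C (q : ℝ) * X)).natDegree ≤ q := by
    refine natDegree_comp_le.trans ?_
    have h : (C (q:ℝ) * X).natDegree ≤ 1 := (natDegree_C_mul_le _ _).trans (by simp)
    calc (Chebyshev.T ℝ (q : ℤ)).natDegree * (C (q:ℝ) * X).natDegree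
        ≤ q * 1 := Nat.mul_le_mul (natDegree_T_le q) h
      _ = q := by ring
  have h2 : (∏ j ∈ Finset.Icc 1 q, (1 - C (j : ℝ) * X)).natDegree ≤ q := by
    refine (natDegree_prod_le _ _).trans ?_
    calc ∑ j ∈ Finset.Icc 1 q, (1 - C (j : ℝ) * X).natDegree
        ≤ ∑ _j ∈ Finset.Icc 1 q, 1 := by
          apply Finset.sum_le_sum
          intro i _
          refine (natDegree_sub_le _ _).trans (max_le (by simp) ?_)
          exact (natDegree_C_mul_le _ _).trans (by simp)
      _ = q := by simp
  omega

private lemma part2 (q N : ℕ) (hN : 0 < N) : |(hPoly q).eval (1 / (N : ℝ))| ≤ 1 := by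
  rcases le_or_gt N q with h | h
  · have : (∏ j ∈ Finset.Icc 1 q, (1 - (j:ℝ) * (1/N))) = 0 := by
      apply Finset.prod_eq_zero (Finset.mem_Icc.2 ⟨hN, h⟩)
      have : (0:ℝ) < N := by exact_mod_cast hN
      field_simp
      norm_num
    rw [hPoly_eval, this, mul_zero]
    norm_num
  · rw [hPoly_eval, abs_mul]
    have hN0 : (0:ℝ) < N := by exact_mod_cast hN
    have h1 : |(Chebyshev.T ℝ (q:ℤ)).eval ((q:ℝ) * (1/N))| ≤ 1 := by
      apply abs_T_le_one
      have hq : (q:ℝ) ≤ N := by exact_mod_cast h.le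
      constructor
      · have : 0 ≤ (q:ℝ) * (1/N) := by positivity
        linarith
      · rw [mul_one_div, div_le_one hN0]; exact hq
    have h2 : |∏ j ∈ Finset.Icc 1 q, (1 - (j:ℝ) * (1/N))| ≤ 1 := by
      rw [Finset.abs_prod]
      apply Finset.prod_le_one
      · intro i _; positivity
      · intro i hi
        obtain ⟨hi1, hi2⟩ := Finset.mem_Icc.1 hi
        have hiN : (i:ℝ) ≤ N := by exact_mod_cast (hi2.trans h.le)
        rw [abs_le]
        constructor
        · rw [mul_one_div]
          have : (i:ℝ)/N ≤ 1 := by rw [div_le_one hN0]; exact hiN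
          linarith
        · have : 0 ≤ (i:ℝ) * (1/N) := by positivity
          linarith
    calc _ ≤ 1 * 1 := mul_le_mul h1 h2 (abs_nonneg _) zero_le_one
      _ = 1 := by norm_num

private lemma part3 (q : ℕ) (hq : 0 < q) :
    ∃ x ∈ Set.Icc (0:ℝ) (200/(q:ℝ)), (2:ℝ)^q ≤ |(hPoly q).eval x| := by
  have hq0 : (0:ℝ) < q := by exact_mod_cast hq
  rcases le_or_gt q 40 with hsm | hlg
  · -- small q : take x = 200/q
    refine ⟨200/(q:ℝ), ⟨by positivity, le_refl _⟩, ?_⟩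
    rw [hPoly_eval, abs_mul]
    have hT : 1 ≤ |(Chebyshev.T ℝ (q:ℤ)).eval ((q:ℝ)*(200/q))| := by
      have h200 : (q:ℝ)*(200/q) = 200 := by field_simp
      rw [h200]
      exact ((one_le_T_eval q 200 (by norm_num)).1).trans (le_abs_self _)
    have hP : (2:ℝ)^q ≤ |∏ j ∈ Finset.Icc 1 q, (1 - (j:ℝ)*(200/q))| := by
      rw [Finset.abs_prod]
      calc (2:ℝ)^q ≤ 4^q := by apply pow_le_pow_left₀ <;> norm_num
        _ = ∏ _j ∈ Finset.Icc 1 q, (4:ℝ) := by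
            rw [Finset.prod_const, Nat.card_Icc, Nat.add_sub_cancel]
        _ ≤ ∏ j ∈ Finset.Icc 1 q, |1 - (j:ℝ)*(200/q)| := by
            apply Finset.prod_le_prod (fun i _ => by norm_num)
            intro i hi
            obtain ⟨hi1, _⟩ := Finset.mem_Icc.1 hi
            have hi1' : (1:ℝ) ≤ i := by exact_mod_cast hi1
            have hq40 : (q:ℝ) ≤ 40 := by exact_mod_cast hsm
            have hx5 : (5:ℝ) ≤ 200/q := by
              rw [le_div_iff₀ hq0]; nlinarith
            have hge : (5:ℝ) ≤ (i:ℝ)*(200/q) := by nlinarith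
            rw [abs_of_nonpos (by linarith)]
            linarith
    calc (2:ℝ)^q = 1 * 2^q := by ring
      _ ≤ _ := mul_le_mul hT hP (by positivity) (abs_nonneg _)
  · -- large q : take x = 2/(2k+1), k = ⌈q/200⌉
    have hq41 : (41:ℝ) ≤ q := by exact_mod_cast hlg
    set k : ℕ := ⌈(q:ℝ)/200⌉₊ with hk
    have hklb : (q:ℝ)/200 ≤ k := Nat.le_ceil _
    have hkub : (k:ℝ) < q/200 + 1 := by
      apply Nat.ceil_lt_add_one; positivity
    have hk1 : 1 ≤ k := Nat.ceil_pos.2 (by positivity)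
    have hkq : k ≤ q := by
      have : (k:ℝ) < q := by linarith
      exact_mod_cast this.le
    set x : ℝ := 2/(2*(k:ℝ)+1) with hx
    have hden : (0:ℝ) < 2*(k:ℝ)+1 := by positivity
    have hbound : 2*(k:ℝ)+1 ≤ (q:ℝ)/12 := by linarith
    have hxle : x ≤ 200/q := by
      rw [hx, div_le_div_iff₀ hden hq0]
      linarith
    have hxge : 24/(q:ℝ) ≤ x := by
      rw [hx, div_le_div_iff₀ hq0 hden]
      linarith
    refine ⟨x, ⟨by positivity, hxle⟩, ?_⟩
    rw [hPoly_eval, abs_mul]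
    have hT : 1 ≤ |(Chebyshev.T ℝ (q:ℤ)).eval ((q:ℝ)*x)| := by
      have h1 : (1:ℝ) ≤ (q:ℝ)*x := by
        rw [hx, mul_div_assoc', le_div_iff₀ hden]
        linarith
      exact ((one_le_T_eval q _ h1).1).trans (le_abs_self _)
    have hfact : ((q:ℝ)/3)^q ≤ (q.factorial : ℝ) := by
      have h := pow_le_three_pow_mul_factorial q
      rw [div_pow, div_le_iff₀ (by positivity)]
      linarith
    have hP : (2:ℝ)^q ≤ |∏ j ∈ Finset.Icc 1 q, (1 - (j:ℝ)*x)| := by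
      rw [Finset.abs_prod]
      have hcb : (q.factorial : ℝ) * (1/2)^q ≤ ((k.factorial * (q-k).factorial : ℕ) : ℝ) := by
        have h := choose_bound q k hkq
        have h2q : ((1:ℝ)/2)^q * 2^q = 1 := by
          rw [← mul_pow]; norm_num
        nlinarith [pow_pos (by norm_num : (0:ℝ) < 1/2) q]
      calc (2:ℝ)^q = ((24/q) * (1/2) * ((q/3) * (1/2)))^q := by
            congr 1; field_simp; ring
        _ = (24/(q:ℝ))^q * (1/2)^q * ((q:ℝ)/3)^q * (1/2)^q := by
            rw [mul_pow, mul_pow, mul_pow]; ring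
        _ ≤ x^q * (1/2)^q * (q.factorial : ℝ) * (1/2)^q := by
            gcongr
        _ = x^q * (1/2)^q * ((q.factorial : ℝ) * (1/2)^q) := by ring
        _ ≤ x^q * (1/2)^q * ((k.factorial * (q-k).factorial : ℕ) : ℝ) := by
            gcongr
        _ ≤ _ := by rw [hx]; exact prod_lower q k hk1 hkq
    calc (2:ℝ)^q = 1 * 2^q := by ring
      _ ≤ _ := mul_le_mul hT hP (by positivity) (abs_nonneg _)

theorem stmt_1 :
    (∀ q : ℕ, (hPoly q).natDegree ≤ 2 * q) ∧
    (∀ q : ℕ, ∀ N : ℕ, 0 < N → |(hPoly q).eval (1 / (N : ℝ))| ≤ 1) ∧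
    (∃ c : ℝ, 0 < c ∧ ∀ q : ℕ, 0 < q →
      ∃ x ∈ Set.Icc (0 : ℝ) (c / (q : ℝ)), (2 : ℝ) ^ q ≤ |(hPoly q).eval x|) := by
  exact ⟨part1, part2, 200, by norm_num, part3⟩
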